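/- (C4: recursive Taylor accumulates higher-order derivatives for analytic activations.) Let f = f_n ∘ ⋯ ∘ f_1 be a network whose layers f_l : ℝ^{d_l} → ℝ^{d_{l+1}} are twice continuously differentiable (e.g., linear layers with the analytic Softplus activation), let R^l be the DTD relevance functions, and let the root-point functions ã_l^{(j)} be differentiable at a_l. Then by the product rule the Jacobian of R^l decomposes entrywise as ∂R^l_k/∂a_{l,m}(a_l) = ∑_{j=1}^{d_{l+1}} [ (δ_{km} − ∂ã^{(j)}_{l,k}/∂a_{l,m}(a_l)) · (∂(R^{l+1}_j ∘ f_l)/∂a_{l,k})(ã^{(j)}_l(a_l)) + (a_{l,k} − ã^{(j)}_{l,k}(a_l)) · ∂/∂a_{l,m}[ (∂(R^{l+1}_j ∘ f_l)/∂a_{l,k})(ã^{(j)}_l(a_l)) ] ]; the second summand involves the second derivatives of R^{l+1}_j ∘ f_l composed with the root-function Jacobian, so each recursive application of the Taylor theorem produces a derivative of R^{l+1} ∘ f_l of one order higher. -/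

import Mathlib

noncomputable section

lemma dtd_key {d : ℕ} (a : Fin d → ℝ) (ρ : (Fin d → ℝ) → Fin d → ℝ)
    (g : (Fin d → ℝ) → ℝ)
    (hρ : DifferentiableAt ℝ ρ a) (hg : ContDiffAt ℝ 2 g (ρ a)) (k i : Fin d) :
    fderiv ℝ (fun b => fderiv ℝ g (ρ b) (Pi.single k 1) * (b k - ρ b k)) a (Pi.single i 1)
      = ((if k = i then (1:ℝ) else 0) - fderiv ℝ (fun b => ρ b k) a (Pi.single i 1))
          * fderiv ℝ g (ρ a) (Pi.single k 1)
        + (a k - ρ a k)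
          * fderiv ℝ (fun b => fderiv ℝ g (ρ b) (Pi.single k 1)) a (Pi.single i 1) := by
  have hg' : DifferentiableAt ℝ (fderiv ℝ g) (ρ a) :=
    (hg.fderiv_right (m := 1) le_rfl).differentiableAt one_ne_zero
  have hu : DifferentiableAt ℝ (fun b => fderiv ℝ g (ρ b) (Pi.single k 1)) a := by
    exact ((ContinuousLinearMap.apply ℝ ℝ (Pi.single k 1)).differentiableAt).comp a
      (hg'.comp a hρ)
  have hρk : DifferentiableAt ℝ (fun b => ρ b k) a := (differentiableAt_pi.1 hρ) k
  have hev : DifferentiableAt ℝ (fun b : Fin d → ℝ => b k) a :=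
    (differentiableAt_pi.1 differentiableAt_fun_id) k
  have hv : DifferentiableAt ℝ (fun b => b k - ρ b k) a := hev.sub hρk
  rw [fderiv_fun_mul hu hv]
  simp only [ContinuousLinearMap.add_apply, ContinuousLinearMap.smul_apply, smul_eq_mul]
  rw [fderiv_fun_sub hev hρk]
  have : fderiv ℝ (fun b : Fin d → ℝ => b k) a = ContinuousLinearMap.proj k := by
    exact (ContinuousLinearMap.proj k : (Fin d → ℝ) →L[ℝ] ℝ).fderiv
  rw [ContinuousLinearMap.sub_apply, this]
  simp [ContinuousLinearMap.proj_apply, Pi.single_apply]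
  ring

lemma dtd_diff {d : ℕ} (a : Fin d → ℝ) (ρ : (Fin d → ℝ) → Fin d → ℝ)
    (g : (Fin d → ℝ) → ℝ)
    (hρ : DifferentiableAt ℝ ρ a) (hg : ContDiffAt ℝ 2 g (ρ a)) (k : Fin d) :
    DifferentiableAt ℝ (fun b => fderiv ℝ g (ρ b) (Pi.single k 1) * (b k - ρ b k)) a := by
  have hg' : DifferentiableAt ℝ (fderiv ℝ g) (ρ a) :=
    (hg.fderiv_right (m := 1) le_rfl).differentiableAt one_ne_zero
  have hu : DifferentiableAt ℝ (fun b => fderiv ℝ g (ρ b) (Pi.single k 1)) a := by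
    exact ((ContinuousLinearMap.apply ℝ ℝ (Pi.single k 1)).differentiableAt).comp a
      (hg'.comp a hρ)
  exact hu.mul (((differentiableAt_pi.1 differentiableAt_fun_id) k).fun_sub
    ((differentiableAt_pi.1 hρ) k))

theorem dtd_smooth_layers_higher_order_terms
    (m : ℕ) (d : ℕ → ℕ)
    (f : ∀ l, (Fin (d l) → ℝ) → Fin (d (l+1)) → ℝ)
    (hsmooth : ∀ l, ContDiff ℝ 2 (f l))
    (ξ : Fin (d (m+1)))
    (R : ∀ l, (Fin (d l) → ℝ) → Fin (d l) → ℝ)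
    (ρ : ∀ l, Fin (d (l+1)) → (Fin (d l) → ℝ) → Fin (d l) → ℝ)
    (hRrec : ∀ l, l < m → ∀ (a : Fin (d l) → ℝ) (k : Fin (d l)),
      R l a k = ∑ j, fderiv ℝ (fun b => R (l+1) (f l b) j) (ρ l j a) (Pi.single k 1)
        * (a k - ρ l j a k))
    (hRtop : ∀ (a : Fin (d m) → ℝ) (k : Fin (d m)),
      R m a k = fderiv ℝ (fun b => f m b ξ) (ρ m ξ a) (Pi.single k 1) * (a k - ρ m ξ a k)) :
    (∀ l, l < m → ∀ a : Fin (d l) → ℝ,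
      (∀ j : Fin (d (l+1)), DifferentiableAt ℝ (ρ l j) a) →
      (∀ j : Fin (d (l+1)), ContDiffAt ℝ 2 (fun b => R (l+1) (f l b) j) (ρ l j a)) →
      ∀ k i : Fin (d l),
        fderiv ℝ (fun b => R l b k) a (Pi.single i 1) =
          ∑ j,
            (((if k = i then (1:ℝ) else 0)
                - fderiv ℝ (fun b => ρ l j b k) a (Pi.single i 1))
              * fderiv ℝ (fun b => R (l+1) (f l b) j) (ρ l j a) (Pi.single k 1)
            + (a k - ρ l j a k)
              * fderiv ℝ
                  (fun b => fderiv ℝ (fun c => R (l+1) (f l c) j) (ρ l j b) (Pi.single k 1))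
                  a (Pi.single i 1)))
    ∧ (∀ a : Fin (d m) → ℝ,
      DifferentiableAt ℝ (ρ m ξ) a →
      ∀ k i : Fin (d m),
        fderiv ℝ (fun b => R m b k) a (Pi.single i 1) =
          ((if k = i then (1:ℝ) else 0)
              - fderiv ℝ (fun b => ρ m ξ b k) a (Pi.single i 1))
            * fderiv ℝ (fun b => f m b ξ) (ρ m ξ a) (Pi.single k 1)
          + (a k - ρ m ξ a k)
            * fderiv ℝ
                (fun b => fderiv ℝ (fun c => f m c ξ) (ρ m ξ b) (Pi.single k 1))
                a (Pi.single i 1)) := by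
  constructor
  · intro l hl a hρd hRd k i
    have hfun : (fun b => R l b k)
        = fun b => ∑ j, fderiv ℝ (fun c => R (l+1) (f l c) j) (ρ l j b) (Pi.single k 1)
            * (b k - ρ l j b k) := funext fun b => hRrec l hl b k
    rw [hfun]
    rw [fderiv_fun_sum (fun j _ => dtd_diff a (ρ l j) _ (hρd j) (hRd j) k)]
    rw [ContinuousLinearMap.sum_apply]
    exact Finset.sum_congr rfl fun j _ => dtd_key a (ρ l j) _ (hρd j) (hRd j) k i
  · intro a hρd k i
    have hfun : (fun b => R m b k)
        = fun b => fderiv ℝ (fun c => f m c ξ) (ρ m ξ b) (Pi.single k 1)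
            * (b k - ρ m ξ b k) := funext fun b => hRtop b k
    rw [hfun]
    exact dtd_key a (ρ m ξ) _ hρd ((contDiff_pi.1 (hsmooth m) ξ).contDiffAt) k i
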